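/- Let X₁, X₂, X₃ ∈ ℂ, let r ∈ ℂ satisfy r² = X₁² − 1 and r ≠ 0, and suppose Θ(X₁,X₂,X₃) ≠ 0. Let s₁(r), s₂(r) be the section matrices s₁(r) = [[X₁ + r, 0], [0, X₁ − r]] and s₂(r) = [[X₂ − (X₁X₂ − X₃)/r, 1], [−Θ/(X₁² − 1), X₂ + (X₁X₂ − X₃)/r]]. Then there exists h in SL(2,ℂ) such that h s₁(r) h⁻¹ = s₁(−r) and h s₂(r) h⁻¹ = s₂(−r); i.e. the two determinations of the square root in the section s yield gauge-equivalent (simultaneously conjugate) pairs. -/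

import Mathlib

open Matrix
open scoped MatrixGroups

/-- `Θ(X₁,X₂,X₃) := (X₃ − X₁X₂)² − (X₁² − 1)(X₂² − 1)`. -/
def Theta (X₁ X₂ X₃ : ℂ) : ℂ := (X₃ - X₁ * X₂) ^ 2 - (X₁ ^ 2 - 1) * (X₂ ^ 2 - 1)

/-- The first section matrix `s₁(r)`. -/
def sec₁ (X₁ r : ℂ) : Matrix (Fin 2) (Fin 2) ℂ := !![X₁ + r, 0; 0, X₁ - r]

/-- The second section matrix `s₂(r)`. -/
noncomputable def sec₂ (X₁ X₂ X₃ r : ℂ) : Matrix (Fin 2) (Fin 2) ℂ :=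
  !![X₂ - (X₁ * X₂ - X₃) / r, 1;
     -(Theta X₁ X₂ X₃) / (X₁ ^ 2 - 1), X₂ + (X₁ * X₂ - X₃) / r]

/-- The two determinations of the square root in the section yield gauge-equivalent
(simultaneously `SL(2,ℂ)`-conjugate) pairs of matrices. -/
theorem section_sqrt_determinations_conjugate (X₁ X₂ X₃ r : ℂ)
    (hr : r ^ 2 = X₁ ^ 2 - 1) (hr0 : r ≠ 0) (hTheta : Theta X₁ X₂ X₃ ≠ 0) :
    ∃ h : SL(2, ℂ),
      (h : Matrix (Fin 2) (Fin 2) ℂ) * sec₁ X₁ r * ((h⁻¹ : SL(2, ℂ)) : Matrix (Fin 2) (Fin 2) ℂ) =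
        sec₁ X₁ (-r) ∧
      (h : Matrix (Fin 2) (Fin 2) ℂ) * sec₂ X₁ X₂ X₃ r *
          ((h⁻¹ : SL(2, ℂ)) : Matrix (Fin 2) (Fin 2) ℂ) =
        sec₂ X₁ X₂ X₃ (-r) := by
  obtain ⟨c, hc⟩ := IsAlgClosed.exists_pow_nat_eq (Theta X₁ X₂ X₃) (n := 2) (by norm_num)
  have hc0 : c ≠ 0 := by rintro rfl; simp at hc; exact hTheta hc.symm
  have hdet : (!![0, r / c; -(c / r), 0] : Matrix (Fin 2) (Fin 2) ℂ).det = 1 := by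
    simp [Matrix.det_fin_two_of]
    field_simp
  refine ⟨⟨_, hdet⟩, ?_, ?_⟩ <;>
  · erw [Matrix.SpecialLinearGroup.coe_inv]
    simp only [Matrix.SpecialLinearGroup.coe_mk, Matrix.adjugate_fin_two_of]
    simp only [sec₁, sec₂, ← hc, ← hr]
    ext i j
    fin_cases i <;> fin_cases j <;>
      · simp [Matrix.mul_apply, Fin.sum_univ_two]
        try field_simp
        try ring
        try linear_combination (-(r*X₂*X₁*c) + r*X₃*c) * (mul_inv_cancel₀ hr0)
        try linear_combination (c*X₂*r*X₁ - c*r*X₃) * (mul_inv_cancel₀ hr0)
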